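/- Let K and H be subgroups of a topological group G with K neutral. For each symmetric open neighborhood V of the identity, set E_V = {(π(x), π(y)) : π(y) ∈ π(Vx)} on Z = K\G/H, where π is the canonical map. Then the family {E_V : V symmetric open neighborhood of e} is a base for a uniformity on Z, and the topology induced by this uniformity coincides with the quotient topology on Z. -/

import Mathlib

open scoped Pointwise
open scoped Uniformity
open scoped Topology
open Filter Set
open scoped SetRel

/-- The quotient topology on the double coset space. -/
instance dosetQuotientTopology {G : Type*} [Group G] [TopologicalSpace G] (K H : Set G) :
    TopologicalSpace (DoubleCoset.Quotient K H) :=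
  inferInstanceAs (TopologicalSpace (Quotient (DoubleCoset.setoid K H)))

/-- The entourage `E_V = {(π(x), π(y)) : π(y) ∈ π(Vx)}` on the double coset space
`Z = K\G/H`, where `π` is the canonical map. -/
def dosetEnt {G : Type*} [Group G] [TopologicalSpace G] (K H : Subgroup G) (V : Set G) :
    Set (DoubleCoset.Quotient (K : Set G) (H : Set G) × DoubleCoset.Quotient (K : Set G) (H : Set G)) :=
  {p | ∃ x : G, p.1 = DoubleCoset.mk K H x ∧ p.2 ∈ DoubleCoset.mk K H '' (V * {x})}

section aux

variable {G : Type*} [Group G] [TopologicalSpace G] (K H : Subgroup G)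

/-- Membership in `dosetEnt` in terms of representatives. -/
lemma dosetEnt_mk_mk (V : Set G) (x y : G) :
    ((DoubleCoset.mk K H x, DoubleCoset.mk K H y) ∈ dosetEnt K H V) ↔
      ∃ k₁ ∈ K, ∃ v ∈ V, ∃ k₂ ∈ K, ∃ h ∈ H, y = k₁ * v * k₂ * x * h := by
  constructor
  · rintro ⟨x', hx', z, hz, hzy⟩
    rw [DoubleCoset.eq] at hx'
    obtain ⟨k₂, hk₂, h₀, hh₀, rfl⟩ := hx'
    rw [Set.mem_mul] at hz
    obtain ⟨v, hv, w, (rfl : w = _), rfl⟩ := hz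
    rw [DoubleCoset.eq] at hzy
    obtain ⟨k₁, hk₁, h₁, hh₁, rfl⟩ := hzy
    exact ⟨k₁, hk₁, v, hv, k₂, hk₂, h₀ * h₁, H.mul_mem hh₀ hh₁, by group⟩
  · rintro ⟨k₁, hk₁, v, hv, k₂, hk₂, h, hh, rfl⟩
    refine ⟨k₂ * x, ?_, v * (k₂ * x), Set.mul_mem_mul hv rfl, ?_⟩
    · rw [DoubleCoset.eq]; exact ⟨k₂, hk₂, 1, H.one_mem, by group⟩
    · rw [DoubleCoset.eq]; exact ⟨k₁, hk₁, h, hh, by group⟩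

lemma dosetEnt_mono {V W : Set G} (hVW : V ⊆ W) : dosetEnt K H V ⊆ dosetEnt K H W := by
  rintro ⟨a, b⟩ ⟨x, hx, z, hz, hzb⟩
  exact ⟨x, hx, z, Set.mul_subset_mul_right hVW hz, hzb⟩

lemma dosetEnt_refl {V : Set G} (hV : (1 : G) ∈ V)
    (a : DoubleCoset.Quotient (K : Set G) (H : Set G)) : (a, a) ∈ dosetEnt K H V := by
  induction a using Quotient.inductionOn' with
  | h x =>
    exact (dosetEnt_mk_mk K H V x x).2
      ⟨1, K.one_mem, 1, hV, 1, K.one_mem, 1, H.one_mem, by group⟩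

lemma dosetEnt_symm {V : Set G} (hV : V⁻¹ = V) {a b : DoubleCoset.Quotient (K : Set G) (H : Set G)}
    (hab : (a, b) ∈ dosetEnt K H V) : (b, a) ∈ dosetEnt K H V := by
  induction a using Quotient.inductionOn' with
  | h x =>
  induction b using Quotient.inductionOn' with
  | h y =>
  obtain ⟨k₁, hk₁, v, hv, k₂, hk₂, h, hh, rfl⟩ := (dosetEnt_mk_mk K H V x _).1 hab
  refine (dosetEnt_mk_mk K H V _ x).2
    ⟨k₂⁻¹, K.inv_mem hk₂, v⁻¹, ?_, k₁⁻¹, K.inv_mem hk₁, h⁻¹, H.inv_mem hh, by group⟩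
  rw [← hV]; exact Set.inv_mem_inv.2 hv

end aux

section aux2

variable {G : Type*} [Group G] [TopologicalSpace G] [IsTopologicalGroup G] (K H : Subgroup G)

lemma dosetEnt_comp
    (hK : ∀ U : Set G, IsOpen U → (1 : G) ∈ U →
      ∃ V : Set G, IsOpen V ∧ (1 : G) ∈ V ∧ (K : Set G) * V ⊆ U * (K : Set G))
    {V' : Set G} (hV'o : IsOpen V') (hV'1 : (1 : G) ∈ V') :
    ∃ V : Set G, (IsOpen V ∧ (1 : G) ∈ V ∧ V⁻¹ = V) ∧
      dosetEnt K H V ○ dosetEnt K H V ⊆ dosetEnt K H V' := by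
  obtain ⟨W, hWo, hW1, hWW⟩ := exists_open_nhds_one_mul_subset (hV'o.mem_nhds hV'1)
  obtain ⟨V₁, hV₁o, hV₁1, hV₁⟩ := hK W hWo hW1
  refine ⟨V₁ ∩ V₁⁻¹ ∩ (W ∩ W⁻¹), ?_, ?_⟩
  · refine ⟨(hV₁o.inter hV₁o.inv).inter (hWo.inter hWo.inv),
      ⟨⟨hV₁1, by simpa using hV₁1⟩, ⟨hW1, by simpa using hW1⟩⟩, ?_⟩
    ext g
    simp only [Set.mem_inter_iff, Set.mem_inv, inv_inv]
    tauto
  · rintro ⟨a, c⟩ ⟨b, hab, hbc⟩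
    induction a using Quotient.inductionOn' with
    | h x =>
    induction b using Quotient.inductionOn' with
    | h y =>
    induction c using Quotient.inductionOn' with
    | h z =>
    obtain ⟨k₁, hk₁, v, hv, k₂, hk₂, h, hh, rfl⟩ := (dosetEnt_mk_mk K H _ x y).1 hab
    obtain ⟨k₁', hk₁', v', hv', k₂', hk₂', h', hh', rfl⟩ := (dosetEnt_mk_mk K H _ _ _).1 hbc
    have hmem : (k₂' * k₁) * v ∈ (K : Set G) * V₁ :=
      Set.mul_mem_mul (K.mul_mem hk₂' hk₁) hv.1.1
    obtain ⟨w, hw, k₃, hk₃, hwk⟩ := Set.mem_mul.1 (hV₁ hmem)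
    have hk₂'eq : k₂' = w * k₃ * v⁻¹ * k₁⁻¹ := by rw [hwk]; group
    exact (dosetEnt_mk_mk K H V' x _).2
      ⟨k₁', hk₁', v' * w, hWW (Set.mul_mem_mul hv'.2.1 hw), k₃ * k₂,
        K.mul_mem hk₃ hk₂, h * h', H.mul_mem hh hh', by rw [hk₂'eq]; group⟩

end aux2

/-- if `K` is neutral, the family `{E_V : V symmetric open nbhd of e}`
is a base for a uniformity on `Z = K\G/H` inducing the quotient topology. -/
theorem stmt_5 {G : Type*} [Group G] [TopologicalSpace G] [IsTopologicalGroup G]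
    (K H : Subgroup G)
    (hK : ∀ U : Set G, IsOpen U → (1 : G) ∈ U →
      ∃ V : Set G, IsOpen V ∧ (1 : G) ∈ V ∧ (K : Set G) * V ⊆ U * (K : Set G)) :
    ∃ 𝒰 : UniformSpace (DoubleCoset.Quotient (K : Set G) (H : Set G)),
      (@uniformity _ 𝒰).HasBasis
        (fun V : Set G => IsOpen V ∧ (1 : G) ∈ V ∧ V⁻¹ = V)
        (fun V => dosetEnt K H V) ∧
      𝒰.toTopologicalSpace =
        (dosetQuotientTopology (K : Set G) (H : Set G)) := by
  classical
  set Z := DoubleCoset.Quotient (K : Set G) (H : Set G) with hZdef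
  set prop : Set G → Prop := fun V => IsOpen V ∧ (1 : G) ∈ V ∧ V⁻¹ = V with hprop
  set F : Filter (Z × Z) := ⨅ (V : Set G) (_ : prop V), 𝓟 (dosetEnt K H V) with hF
  have hbasis : F.HasBasis prop (dosetEnt K H) := by
    refine Filter.hasBasis_biInf_principal' ?_
      ⟨Set.univ, isOpen_univ, Set.mem_univ _, Set.inv_univ⟩
    rintro i ⟨hio, hi1, his⟩ j ⟨hjo, hj1, hjs⟩
    exact ⟨i ∩ j, ⟨hio.inter hjo, ⟨hi1, hj1⟩, by rw [Set.inter_inv, his, hjs]⟩,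
      dosetEnt_mono K H Set.inter_subset_left, dosetEnt_mono K H Set.inter_subset_right⟩
  have hrefl : 𝓟 SetRel.id ≤ F := by
    refine le_iInf₂ fun V hV => Filter.principal_mono.2 ?_
    rintro ⟨a, b⟩ hab
    obtain rfl : a = b := hab
    exact dosetEnt_refl K H hV.2.1 a
  have hsymm : Tendsto Prod.swap F F := by
    refine (hbasis.tendsto_iff hbasis).2 fun V hV => ⟨V, hV, ?_⟩
    rintro ⟨a, b⟩ hab
    exact dosetEnt_symm K H hV.2.2 hab
  have hcomp : F.lift' (fun s => s ○ s) ≤ F := by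
    refine le_iInf₂ fun V' hV' => Filter.le_principal_iff.2 ?_
    obtain ⟨V, hV, hsub⟩ := dosetEnt_comp K H hK hV'.1 hV'.2.1
    exact Filter.mem_of_superset (Filter.mem_lift' (hbasis.mem_of_mem hV)) hsub
  let core : UniformSpace.Core Z := ⟨F, hrefl, hsymm, hcomp⟩
  let 𝒰 : UniformSpace Z := UniformSpace.ofCore core
  have hU : 𝓤[𝒰] = F := rfl
  refine ⟨𝒰, by rw [hU]; exact hbasis, ?_⟩
  have hquot : ∀ s : Set Z,
      IsOpen[dosetQuotientTopology (K : Set G) (H : Set G)] s ↔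
        IsOpen (DoubleCoset.mk K H ⁻¹' s) := fun s => Iff.rfl
  refine TopologicalSpace.ext_iff.mpr fun s => ?_
  rw [@isOpen_uniformity _ 𝒰 s, hquot s]
  constructor
  · -- uniformly open → quotient open
    intro hus
    rw [isOpen_iff_mem_nhds]
    intro x hx
    obtain ⟨V, hV, hsub⟩ := hbasis.mem_iff.1 (hU ▸ hus (DoubleCoset.mk K H x) hx)
    refine Filter.mem_of_superset (((hV.1.mul_right : IsOpen (V * {x})).mem_nhds ?_)) ?_
    · exact ⟨1, hV.2.1, x, rfl, one_mul x⟩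
    · rintro g ⟨v, hv, x', hx', rfl⟩
      have h2 : (DoubleCoset.mk K H x, DoubleCoset.mk K H (v * x')) ∈ dosetEnt K H V :=
        (dosetEnt_mk_mk K H V x _).2 ⟨1, K.one_mem, v, hv, 1, K.one_mem, 1, H.one_mem,
          by rw [show x' = x from hx']; group⟩
      exact hsub h2 rfl
  · -- quotient open → uniformly open
    intro hqs a ha
    induction a using Quotient.inductionOn' with
    | h x₀ =>
    have hWo : IsOpen {g : G | g * x₀ ∈ DoubleCoset.mk K H ⁻¹' s} :=
      hqs.preimage (continuous_mul_right x₀)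
    have hW1 : (1 : G) ∈ {g : G | g * x₀ ∈ DoubleCoset.mk K H ⁻¹' s} := by
      simpa using ha
    obtain ⟨V₁, hV₁o, hV₁1, hV₁⟩ :=
      hK _ hWo.inv (by simpa using hW1)
    rw [hU, hbasis.mem_iff]
    refine ⟨V₁ ∩ V₁⁻¹, ⟨hV₁o.inter hV₁o.inv, ⟨hV₁1, by simpa using hV₁1⟩, ?_⟩, ?_⟩
    · ext g
      simp only [Set.mem_inter_iff, Set.mem_inv, inv_inv]
      tauto
    · rintro ⟨a, b⟩ ⟨x', hx', z, hz, hzb⟩ (hp1 : a = _)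
      rw [Set.mem_mul] at hz
      obtain ⟨v, hv, w, (rfl : w = _), rfl⟩ := hz
      rw [hp1, DoubleCoset.eq] at hx'
      obtain ⟨k₀, hk₀, h₀, hh₀, rfl⟩ := hx'
      -- v ∈ V₁ ∩ V₁⁻¹, so k₀⁻¹ * v⁻¹ ∈ K * V₁ ⊆ W⁻¹ * K
      have hmem : k₀⁻¹ * v⁻¹ ∈ (K : Set G) * V₁ :=
        Set.mul_mem_mul (K.inv_mem hk₀) (Set.mem_inv.1 hv.2)
      obtain ⟨u, hu, k₃, hk₃, huk⟩ := Set.mem_mul.1 (hV₁ hmem)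
      have hueq : u = k₀⁻¹ * v⁻¹ * k₃⁻¹ := by rw [← huk]; group
      have hmk : DoubleCoset.mk K H (u⁻¹ * x₀) = DoubleCoset.mk K H (v * (k₀ * x₀ * h₀)) := by
        rw [DoubleCoset.eq]
        exact ⟨k₃⁻¹, K.inv_mem hk₃, h₀, hh₀, by rw [hueq]; group⟩
      have hus : u⁻¹ * x₀ ∈ DoubleCoset.mk K H ⁻¹' s := by
        have : u⁻¹ ∈ {g : G | g * x₀ ∈ DoubleCoset.mk K H ⁻¹' s} := Set.mem_inv.1 hu
        simpa using this
      have hzb' : b = DoubleCoset.mk K H (v * (k₀ * x₀ * h₀)) := hzb.symm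
      show b ∈ s
      rw [hzb', ← hmk]
      exact hus
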